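/- Let A be a ring, A₀ a subring with retraction π : A → A₀, A₊ = ker π, such that every finitely generated right A-module M with M·A₊ = M is zero. Then the functors S = - ⊗_{A₀} A and T = - ⊗_A A₀ induce mutually inverse bijections between the set of isomorphism classes of finitely generated projective right A₀-modules and the set of isomorphism classes of finitely generated projective right A-modules. -/

import Mathlib

set_option linter.unusedSectionVars false

universe u

/-- Universal property of `Q ⊗_{A₀} A` (for left modules, `A ⊗_{A₀} Q`). -/
def IsBaseChangeAlong (A : Type u) [Ring A] (A₀ : Subring A)
    (Q : Type u) [AddCommGroup Q] [Module A₀ Q]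
    (E : Type u) [AddCommGroup E] [Module A E] (ι : Q →ₗ[A₀] E) : Prop :=
  ∀ (N : Type u) [AddCommGroup N] [Module A N] (f : Q →ₗ[A₀] N),
    ∃! F : E →ₗ[A] N, ∀ q : Q, F (ι q) = f q

/-- The submodule `N·A₊` (for left modules: `A₊·N`), where `A₊ = ker π`;
`N ⧸ kerSMulSubmodule π N` realises the functor `T = - ⊗_A A₀`. -/
def kerSMulSubmodule {A : Type u} [Ring A] {A₀ : Subring A} (π : A →+* A₀)
    (N : Type u) [AddCommGroup N] [Module A N] : Submodule A N :=
  Submodule.span A {x : N | ∃ a ∈ RingHom.ker π, ∃ m : N, x = a • m}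

section Basic
variable {A : Type u} [Ring A] {A₀ : Subring A} (π : A →+* A₀)
variable {N : Type u} [AddCommGroup N] [Module A N]

lemma smul_mem_ker (a : A) (ha : a ∈ RingHom.ker π) (m : N) :
    a • m ∈ kerSMulSubmodule π N :=
  Submodule.subset_span ⟨a, ha, m, rfl⟩

lemma kerSMul_le_iff {p : Submodule A N} :
    kerSMulSubmodule π N ≤ p ↔ ∀ a ∈ RingHom.ker π, ∀ m : N, a • m ∈ p := by
  constructor
  · intro h a ha m
    exact h (smul_mem_ker π a ha m)
  · intro h
    rw [kerSMulSubmodule, Submodule.span_le]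
    rintro x ⟨a, ha, m, rfl⟩
    exact h a ha m

variable (hπ : ∀ x : A₀, π (x : A) = x)

include hπ in
lemma sub_coe_mem_ker (a : A) : a - ↑(π a) ∈ RingHom.ker π := by
  simp [RingHom.mem_ker, hπ]

include hπ in
/-- in the quotient `N ⧸ N·A₊`, the `A`-action factors through `π`. -/
lemma mk_smul_pi (a : A) (x : N) :
    (Submodule.Quotient.mk (a • x) : N ⧸ kerSMulSubmodule π N)
      = Submodule.Quotient.mk ((↑(π a) : A) • x) := by
  rw [Submodule.Quotient.eq]
  have : a • x - (↑(π a) : A) • x = (a - ↑(π a)) • x := by rw [sub_smul]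
  rw [this]
  exact smul_mem_ker π _ (sub_coe_mem_ker π hπ a) x

include hπ in
lemma pi_smul_mk (a : A) (x : N) :
    (a • Submodule.Quotient.mk x : N ⧸ kerSMulSubmodule π N)
      = (↑(π a) : A) • Submodule.Quotient.mk x := by
  rw [← Submodule.Quotient.mk_smul, ← Submodule.Quotient.mk_smul, mk_smul_pi π hπ]

lemma ker_le_comap {M : Type u} [AddCommGroup M] [Module A M] (g : M →ₗ[A] N) :
    kerSMulSubmodule π M ≤ (kerSMulSubmodule π N).comap g := by
  rw [kerSMulSubmodule, Submodule.span_le]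
  rintro x ⟨a, ha, m, rfl⟩
  simpa using smul_mem_ker π a ha (g m)
end Basic

section BCA
variable {A : Type u} [Ring A] {A₀ : Subring A}
variable {Q : Type u} [AddCommGroup Q] [Module A₀ Q]
variable {E : Type u} [AddCommGroup E] [Module A E] (ι : Q →ₗ[A₀] E)

lemma span_range_top (h : IsBaseChangeAlong A A₀ Q E ι) :
    Submodule.span A (Set.range ι) = ⊤ := by
  set E' := Submodule.span A (Set.range ι) with hE'
  obtain ⟨F, hF, hu⟩ := h (E ⧸ E') ((E'.mkQ.restrictScalars A₀).comp ι)
  have h0 : E'.mkQ = F := hu E'.mkQ (fun q => rfl)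
  have hz : (0 : E →ₗ[A] E ⧸ E') = F := by
    refine hu 0 (fun q => ?_)
    have : ι q ∈ E' := Submodule.subset_span ⟨q, rfl⟩
    exact ((Submodule.Quotient.mk_eq_zero _).mpr this).symm
  rw [← hz] at h0
  rw [eq_top_iff]
  intro x _
  exact (Submodule.Quotient.mk_eq_zero E').mp (LinearMap.congr_fun h0 x)

lemma finite_of_bca [Module.Finite A₀ Q] (h : IsBaseChangeAlong A A₀ Q E ι) :
    Module.Finite A E := by
  classical
  obtain ⟨s, hs⟩ := Module.Finite.fg_top (R := A₀) (M := Q)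
  refine ⟨⟨s.image ι, ?_⟩⟩
  rw [eq_top_iff, ← span_range_top ι h, Submodule.span_le]
  rintro _ ⟨q, rfl⟩
  have hq : q ∈ Submodule.span A₀ (↑s : Set Q) := hs ▸ Submodule.mem_top
  induction hq using Submodule.span_induction with
  | mem x hx => exact Submodule.subset_span (by simpa using Finset.mem_image_of_mem ι hx)
  | zero => simp
  | add x y _ _ hx hy => rw [map_add]; exact Submodule.add_mem _ hx hy
  | smul c x _ hx =>
      rw [map_smul]
      exact Submodule.smul_mem _ (↑c : A) hx

lemma projective_of_bca [Module.Projective A₀ Q] (h : IsBaseChangeAlong A A₀ Q E ι) :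
    Module.Projective A E := by
  obtain ⟨s₀, hs₀⟩ := (Module.projective_def' (R := A₀) (P := Q)).mp ‹_›
  set ψ : (Q →₀ A₀) →ₗ[A₀] (E →₀ A) :=
    (Finsupp.lmapDomain A A₀ ι).comp
      (Finsupp.mapRange.linearMap (LinearMap.toSpanSingleton A₀ A 1))
    with hψ
  have key : ∀ g : Q →₀ A₀,
      Finsupp.linearCombination A (id : E → E) (ψ g)
        = ι (Finsupp.linearCombination A₀ (id : Q → Q) g) := by
    intro g
    induction g using Finsupp.induction_linear with
    | zero => simp
    | add f g hf hg => simp [map_add, hf, hg]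
    | single q c =>
        simp only [hψ, LinearMap.comp_apply, Finsupp.mapRange.linearMap_apply,
          Finsupp.mapRange_single, LinearMap.toSpanSingleton_apply, Finsupp.lmapDomain_apply,
          Finsupp.mapDomain_single, Finsupp.linearCombination_single, id_eq,
          Finsupp.linearCombination_single, map_smul]
        rw [smul_assoc, one_smul]
  obtain ⟨S, hS, -⟩ := h (E →₀ A) (ψ.comp s₀)
  refine (Module.projective_def' (R := A) (P := E)).mpr ⟨S, ?_⟩
  obtain ⟨F, hF, hu⟩ := h E ι
  have h1 : Finsupp.linearCombination A (id : E → E) ∘ₗ S = F := by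
    refine hu _ (fun q => ?_)
    simp only [LinearMap.comp_apply, hS]
    rw [key]
    congr 1
    exact DFunLike.congr_fun hs₀ q
  have h2 : LinearMap.id = F := hu _ (fun q => rfl)
  rw [h1, ← h2]
end BCA

/-- `Q` regarded as an `A`-module through `π`. -/
def PiMod {A : Type u} [Ring A] {A₀ : Subring A} (_π : A →+* A₀) (Q : Type u) : Type u := Q

section PiModSec
variable {A : Type u} [Ring A] {A₀ : Subring A} (π : A →+* A₀)
variable (Q : Type u) [AddCommGroup Q] [Module A₀ Q]

instance : AddCommGroup (PiMod π Q) := inferInstanceAs (AddCommGroup Q)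
instance : Module A (PiMod π Q) := Module.compHom Q π

def PiMod.mk : Q → PiMod π Q := id
def PiMod.out : PiMod π Q → Q := id

variable {Q}

@[simp] lemma PiMod.out_mk (q : Q) : PiMod.out π Q (PiMod.mk π Q q) = q := rfl
@[simp] lemma PiMod.mk_out (q : PiMod π Q) : PiMod.mk π Q (PiMod.out π Q q) = q := rfl
@[simp] lemma PiMod.out_zero : PiMod.out π Q 0 = 0 := rfl
@[simp] lemma PiMod.out_add (x y : PiMod π Q) :
    PiMod.out π Q (x + y) = PiMod.out π Q x + PiMod.out π Q y := rfl
@[simp] lemma PiMod.out_smul (a : A) (x : PiMod π Q) :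
    PiMod.out π Q (a • x) = π a • PiMod.out π Q x := rfl
@[simp] lemma PiMod.out_eq_zero {x : PiMod π Q} : PiMod.out π Q x = 0 ↔ x = 0 := Iff.rfl

variable (hπ : ∀ x : A₀, π (x : A) = x)

include hπ in
/-- identity as an `A₀`-linear map `Q → PiMod π Q`. -/
def piModHom : Q →ₗ[A₀] PiMod π Q where
  toFun q := PiMod.mk π Q q
  map_add' _ _ := rfl
  map_smul' c q := by
    show PiMod.mk π Q (c • q) = (↑c : A) • PiMod.mk π Q q
    show PiMod.mk π Q (c • q) = PiMod.mk π Q (π ↑c • q)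
    rw [hπ]

include hπ in
/-- identity as an `A₀`-linear map `PiMod π Q → Q`. -/
def piModInv : PiMod π Q →ₗ[A₀] Q where
  toFun q := PiMod.out π Q q
  map_add' _ _ := rfl
  map_smul' c q := by
    show PiMod.out π Q ((↑c : A) • q) = c • PiMod.out π Q q
    rw [PiMod.out_smul, hπ]

@[simp] lemma piModHom_apply (q : Q) : piModHom π hπ q = PiMod.mk π Q q := rfl
@[simp] lemma piModInv_apply (q : PiMod π Q) : piModInv π hπ q = PiMod.out π Q q := rfl
end PiModSec

section Retraction
variable {A : Type u} [Ring A] {A₀ : Subring A} (π : A →+* A₀)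
  (hπ : ∀ x : A₀, π (x : A) = x)
variable {Q : Type u} [AddCommGroup Q] [Module A₀ Q]
variable {E : Type u} [AddCommGroup E] [Module A E] (ι : Q →ₗ[A₀] E)

include hπ in
lemma retraction_of_bca (h : IsBaseChangeAlong A A₀ Q E ι) :
    ∃ r : E →ₗ[A] PiMod π Q,
      (∀ q : Q, r (ι q) = PiMod.mk π Q q) ∧
      kerSMulSubmodule π E ≤ LinearMap.ker r ∧
      (∀ m : E, (Submodule.Quotient.mk (ι (PiMod.out π Q (r m))) :
          E ⧸ kerSMulSubmodule π E) = Submodule.Quotient.mk m) := by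
  obtain ⟨r, hr, -⟩ := h (PiMod π Q) (piModHom π hπ)
  have hker : kerSMulSubmodule π E ≤ LinearMap.ker r := by
    rw [kerSMulSubmodule, Submodule.span_le]
    rintro x ⟨a, ha, m, rfl⟩
    have hz : PiMod.out π Q (r (a • m)) = 0 := by
      rw [map_smul, PiMod.out_smul, RingHom.mem_ker.mp ha, zero_smul]
    exact LinearMap.mem_ker.mpr hz
  refine ⟨r, fun q => hr q, hker, ?_⟩
  let G₂ : E →ₗ[A] E ⧸ kerSMulSubmodule π E :=
    { toFun := fun m => Submodule.Quotient.mk (ι (PiMod.out π Q (r m)))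
      map_add' := by
        intro x y
        show (Submodule.Quotient.mk (ι (PiMod.out π Q (r (x + y)))) : E ⧸ kerSMulSubmodule π E)
          = Submodule.Quotient.mk (ι (PiMod.out π Q (r x)))
            + Submodule.Quotient.mk (ι (PiMod.out π Q (r y)))
        rw [map_add, PiMod.out_add, map_add, ← Submodule.Quotient.mk_add]
      map_smul' := by
        intro a m
        show (Submodule.Quotient.mk (ι (PiMod.out π Q (r (a • m)))) : E ⧸ kerSMulSubmodule π E)
          = a • Submodule.Quotient.mk (ι (PiMod.out π Q (r m)))
        rw [map_smul, PiMod.out_smul, map_smul]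
        rw [show ((π a : A₀) • ι (PiMod.out π Q (r m)) : E)
            = (↑(π a) : A) • ι (PiMod.out π Q (r m)) from rfl]
        rw [Submodule.Quotient.mk_smul]
        exact (pi_smul_mk π hπ a _).symm }
  obtain ⟨F, hF, hu⟩ := h (E ⧸ kerSMulSubmodule π E)
    (((kerSMulSubmodule π E).mkQ.restrictScalars A₀).comp ι)
  have h1 : (kerSMulSubmodule π E).mkQ = F := hu _ (fun q => rfl)
  have h2 : G₂ = F := by
    refine hu G₂ (fun q => ?_)
    show (Submodule.Quotient.mk (ι (PiMod.out π Q (r (ι q)))) : E ⧸ kerSMulSubmodule π E) = _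
    rw [hr q]
    simp only [piModHom_apply, PiMod.out_mk]
    rfl
  intro m
  exact LinearMap.congr_fun (h2.trans h1.symm) m
end Retraction

section Equiv1
variable {A : Type u} [Ring A] {A₀ : Subring A} (π : A →+* A₀)
  (hπ : ∀ x : A₀, π (x : A) = x)
variable {Q : Type u} [AddCommGroup Q] [Module A₀ Q]
variable {E : Type u} [AddCommGroup E] [Module A E] (ι : Q →ₗ[A₀] E)

include hπ in
lemma equiv_of_bca (h : IsBaseChangeAlong A A₀ Q E ι) :
    ∃ e : Q ≃ₗ[A₀] (E ⧸ kerSMulSubmodule π E),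
      ∀ q : Q, e q = Submodule.Quotient.mk (ι q) := by
  obtain ⟨r, hr, hker, hright⟩ := retraction_of_bca π hπ ι h
  let e₀ : Q →ₗ[A₀] E ⧸ kerSMulSubmodule π E :=
    (((kerSMulSubmodule π E).mkQ).restrictScalars A₀).comp ι
  let inv : (E ⧸ kerSMulSubmodule π E) →ₗ[A₀] Q :=
    (piModInv π hπ).comp (((kerSMulSubmodule π E).liftQ r hker).restrictScalars A₀)
  have h1 : e₀.comp inv = LinearMap.id := by
    apply LinearMap.ext
    intro x
    obtain ⟨m, rfl⟩ := Submodule.Quotient.mk_surjective _ x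
    simp only [e₀, inv, LinearMap.comp_apply, LinearMap.id_apply,
      LinearMap.restrictScalars_apply, piModInv_apply, Submodule.mkQ_apply,
      Submodule.liftQ_apply]
    exact hright m
  have h2 : inv.comp e₀ = LinearMap.id := by
    apply LinearMap.ext
    intro q
    simp only [e₀, inv, LinearMap.comp_apply, LinearMap.id_apply,
      LinearMap.restrictScalars_apply, piModInv_apply, Submodule.mkQ_apply,
      Submodule.liftQ_apply, hr q, PiMod.out_mk]
  exact ⟨LinearEquiv.ofLinear e₀ inv h1 h2, fun q => rfl⟩
end Equiv1

section Part2
variable {A : Type u} [Ring A] {A₀ : Subring A} (π : A →+* A₀)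
  (hπ : ∀ x : A₀, π (x : A) = x)
variable {P : Type u} [AddCommGroup P] [Module A P]

include hπ in
lemma finite_quot [Module.Finite A P] :
    Module.Finite A₀ (P ⧸ kerSMulSubmodule π P) := by
  classical
  obtain ⟨s, hs⟩ := Module.Finite.fg_top (R := A) (M := P)
  refine ⟨⟨s.image (Submodule.Quotient.mk), ?_⟩⟩
  rw [eq_top_iff]
  rintro x -
  obtain ⟨p, rfl⟩ := Submodule.Quotient.mk_surjective _ x
  have hp : p ∈ Submodule.span A (↑s : Set P) := hs ▸ Submodule.mem_top
  induction hp using Submodule.span_induction with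
  | mem y hy => exact Submodule.subset_span (by simpa using Finset.mem_image_of_mem _ hy)
  | zero => simpa using Submodule.zero_mem _
  | add y z _ _ hy hz =>
      rw [Submodule.Quotient.mk_add]
      exact Submodule.add_mem _ hy hz
  | smul a y _ hy =>
      rw [mk_smul_pi π hπ, Submodule.Quotient.mk_smul]
      exact Submodule.smul_mem _ (π a) hy

set_option maxHeartbeats 2000000 in
include hπ in
lemma projective_quot [Module.Projective A P] :
    Module.Projective A₀ (P ⧸ kerSMulSubmodule π P) := by
  classical
  obtain ⟨s, hs⟩ := (Module.projective_def' (R := A) (P := P)).mp ‹_›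
  let φ : (P →₀ A) → ((P ⧸ kerSMulSubmodule π P) →₀ A₀) := fun g =>
    Finsupp.mapDomain (Submodule.Quotient.mk) (Finsupp.mapRange π (map_zero π) g)
  have φ_add : ∀ g₁ g₂, φ (g₁ + g₂) = φ g₁ + φ g₂ := by
    intro g₁ g₂
    show Finsupp.mapDomain (Submodule.Quotient.mk) (Finsupp.mapRange π (map_zero π) (g₁ + g₂))
      = _ + _
    rw [Finsupp.mapRange_add (map_add π), Finsupp.mapDomain_add]
  have φ_smul : ∀ (a : A) (g : P →₀ A), φ (a • g) = π a • φ g := by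
    intro a g
    have hmr : Finsupp.mapRange (⇑π) (map_zero π) (a • g)
        = π a • Finsupp.mapRange (⇑π) (map_zero π) g := by
      ext p
      simp [Finsupp.mapRange_apply, Finsupp.smul_apply, smul_eq_mul, map_mul]
    simp only [φ, hmr, Finsupp.mapDomain_smul]
  let u' : P →ₗ[A] PiMod π ((P ⧸ kerSMulSubmodule π P) →₀ A₀) :=
    { toFun := fun p => PiMod.mk π _ (φ (s p))
      map_add' := fun x y => by
        show PiMod.mk π _ (φ (s (x + y))) = PiMod.mk π _ (φ (s x)) + PiMod.mk π _ (φ (s y))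
        rw [map_add, φ_add]
        rfl
      map_smul' := fun a p => by
        show PiMod.mk π _ (φ (s (a • p))) = a • PiMod.mk π _ (φ (s p))
        rw [map_smul, φ_smul]
        rfl }
  have hker : kerSMulSubmodule π P ≤ LinearMap.ker u' := by
    rw [kerSMul_le_iff]
    intro a ha m
    have hz : φ (s (a • m)) = 0 := by
      rw [map_smul, φ_smul, RingHom.mem_ker.mp ha, zero_smul]
    show u' (a • m) = 0
    show PiMod.mk π _ (φ (s (a • m))) = 0
    rw [hz]
    rfl
  let t₀ : (P ⧸ kerSMulSubmodule π P) →ₗ[A₀] ((P ⧸ kerSMulSubmodule π P) →₀ A₀) :=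
    (piModInv π hπ).comp (((kerSMulSubmodule π P).liftQ u' hker).restrictScalars A₀)
  have key : ∀ g : P →₀ A,
      Finsupp.linearCombination A₀ (id : (P ⧸ kerSMulSubmodule π P) → _) (φ g)
        = Submodule.Quotient.mk (Finsupp.linearCombination A (id : P → P) g) := by
    intro g
    induction g using Finsupp.induction_linear with
    | zero => simp [φ]
    | add f g hf hg =>
        rw [φ_add, map_add, hf, hg, map_add, Submodule.Quotient.mk_add]
    | single p a =>
        simp only [φ, Finsupp.mapRange_single, Finsupp.mapDomain_single,
          Finsupp.linearCombination_single, id_eq]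
        rw [show ((π a : A₀) • (Submodule.Quotient.mk p : P ⧸ kerSMulSubmodule π P))
            = (↑(π a) : A) • Submodule.Quotient.mk p from rfl]
        rw [← pi_smul_mk π hπ, ← Submodule.Quotient.mk_smul]
  refine (Module.projective_def').mpr ⟨t₀, ?_⟩
  ext x
  obtain ⟨p, rfl⟩ := Submodule.Quotient.mk_surjective _ x
  show Finsupp.linearCombination A₀ id
      (PiMod.out π _ ((kerSMulSubmodule π P).liftQ u' hker (Submodule.Quotient.mk p)))
      = Submodule.Quotient.mk p
  rw [Submodule.liftQ_apply]
  show Finsupp.linearCombination A₀ id (φ (s p)) = Submodule.Quotient.mk p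
  rw [key (s p)]
  congr 1
  exact DFunLike.congr_fun hs p
end Part2

section MainIso
variable {A : Type u} [Ring A] {A₀ : Subring A} (π : A →+* A₀)
  (hπ : ∀ x : A₀, π (x : A) = x)
variable {P : Type u} [AddCommGroup P] [Module A P]

set_option maxHeartbeats 2000000 in
include hπ in
lemma main_iso [Module.Finite A P] [Module.Projective A P]
    (hNak : ∀ (M : Type u) [AddCommGroup M] [Module A M], Module.Finite A M →
      kerSMulSubmodule π M = ⊤ → Subsingleton M)
    {E : Type u} [AddCommGroup E] [Module A E]
    (ι : (P ⧸ kerSMulSubmodule π P) →ₗ[A₀] E)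
    (h : IsBaseChangeAlong A A₀ (P ⧸ kerSMulSubmodule π P) E ι) :
    Nonempty (E ≃ₗ[A] P) := by
  haveI : Module.Finite A₀ (P ⧸ kerSMulSubmodule π P) := finite_quot π hπ
  haveI : Module.Projective A₀ (P ⧸ kerSMulSubmodule π P) := projective_quot π hπ
  haveI : Module.Finite A E := finite_of_bca ι h
  set P₀ := P ⧸ kerSMulSubmodule π P with hP₀
  let mkS : P →ₗ[A₀] P₀ := ((kerSMulSubmodule π P).mkQ).restrictScalars A₀
  have hmkS_surj : Function.Surjective mkS := Submodule.Quotient.mk_surjective _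
  obtain ⟨u, hu⟩ := Module.projective_lifting_property mkS LinearMap.id hmkS_surj
  have hu' : ∀ y : P₀, mkS (u y) = y := fun y => LinearMap.congr_fun hu y
  obtain ⟨α, hα, -⟩ := h P u
  -- surjectivity of α
  have hsur : LinearMap.range α = ⊤ := by
    set Rg := LinearMap.range α with hRg
    have htop : kerSMulSubmodule π (P ⧸ Rg) = ⊤ := by
      rw [eq_top_iff]
      rintro x -
      obtain ⟨p, rfl⟩ := Submodule.Quotient.mk_surjective _ x
      have hmem : p - u (mkS p) ∈ kerSMulSubmodule π P := by
        rw [← Submodule.Quotient.mk_eq_zero]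
        show mkS (p - u (mkS p)) = 0
        rw [map_sub, hu' (mkS p), sub_self]
      have h2 : (Submodule.Quotient.mk p : P ⧸ Rg)
          = Submodule.Quotient.mk (p - u (mkS p)) := by
        rw [Submodule.Quotient.eq]
        have : p - (p - u (mkS p)) = u (mkS p) := by abel
        rw [this]
        exact ⟨ι (mkS p), hα (mkS p)⟩
      rw [h2]
      exact ker_le_comap π Rg.mkQ hmem
    haveI : Module.Finite A (P ⧸ Rg) := Module.Finite.quotient A Rg
    have hss := hNak (P ⧸ Rg) inferInstance htop
    exact Submodule.Quotient.subsingleton_iff.mp hss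
  obtain ⟨v, hv⟩ := Module.projective_lifting_property α LinearMap.id
    (LinearMap.range_eq_top.mp hsur)
  have hv' : ∀ p : P, α (v p) = p := fun p => LinearMap.congr_fun hv p
  -- r = mkPi ∘ α
  obtain ⟨r, hr, hkerr, hright⟩ := retraction_of_bca π hπ ι h
  let mkPi : P →ₗ[A] PiMod π P₀ :=
    { toFun := fun p => PiMod.mk π P₀ (Submodule.Quotient.mk p)
      map_add' := fun x y => by
        show PiMod.mk π P₀ (Submodule.Quotient.mk (x + y))
          = PiMod.mk π P₀ (Submodule.Quotient.mk x) + PiMod.mk π P₀ (Submodule.Quotient.mk y)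
        rw [Submodule.Quotient.mk_add]
        rfl
      map_smul' := fun a p => by
        show PiMod.mk π P₀ (Submodule.Quotient.mk (a • p))
          = a • PiMod.mk π P₀ (Submodule.Quotient.mk p)
        rw [mk_smul_pi π hπ, Submodule.Quotient.mk_smul]
        rfl }
  have hreq : r = mkPi ∘ₗ α := by
    obtain ⟨F, hF, huF⟩ := h (PiMod π P₀) (piModHom π hπ)
    have e1 : r = F := huF r hr
    have e2 : mkPi ∘ₗ α = F := by
      refine huF _ (fun x => ?_)
      show PiMod.mk π P₀ (Submodule.Quotient.mk (α (ι x))) = piModHom π hπ x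
      rw [hα x]
      show PiMod.mk π P₀ (mkS (u x)) = piModHom π hπ x
      rw [hu' x]
      rfl
    rw [e1, e2]
  -- injectivity
  have hkerE : LinearMap.ker α ≤ kerSMulSubmodule π E := by
    intro m hm
    have hrm : r m = 0 := by
      rw [hreq]
      show mkPi (α m) = 0
      rw [LinearMap.mem_ker.mp hm, map_zero]
    have := hright m
    rw [hrm] at this
    simp only [PiMod.out_zero, map_zero] at this
    rw [← Submodule.Quotient.mk_eq_zero]
    rw [← this]
    rfl
  set Kα := LinearMap.ker α with hKα
  have hραk : ∀ x : E, α (x - v (α x)) = 0 := by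
    intro x
    rw [map_sub, hv' (α x), sub_self]
  let ρ' : E →ₗ[A] ↥Kα :=
    LinearMap.codRestrict Kα (LinearMap.id - v ∘ₗ α)
      (fun x => LinearMap.mem_ker.mpr (hραk x))
  have hρ'fix : ∀ k : ↥Kα, ρ' (↑k : E) = k := by
    intro k
    apply Subtype.ext
    show (↑k : E) - v (α ↑k) = ↑k
    rw [LinearMap.mem_ker.mp k.2, map_zero, sub_zero]
  haveI : Module.Finite A ↥Kα :=
    Module.Finite.of_surjective ρ' (fun k => ⟨↑k, hρ'fix k⟩)
  have hKtop : kerSMulSubmodule π ↥Kα = ⊤ := by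
    rw [eq_top_iff]
    rintro k -
    have h1 : (↑k : E) ∈ kerSMulSubmodule π E := hkerE k.2
    have h2 := ker_le_comap π ρ' h1
    rw [Submodule.mem_comap, hρ'fix k] at h2
    exact h2
  haveI hss := hNak ↥Kα inferInstance hKtop
  have hKbot : Kα = ⊥ := by
    rw [Submodule.eq_bot_iff]
    intro x hx
    have : (⟨x, hx⟩ : ↥Kα) = 0 := Subsingleton.elim _ _
    exact congrArg Subtype.val this
  exact ⟨LinearEquiv.ofBijective α
    ⟨LinearMap.ker_eq_bot.mp hKbot, LinearMap.range_eq_top.mp hsur⟩⟩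
end MainIso

theorem swan_retraction (A : Type u) [Ring A] (A₀ : Subring A) (π : A →+* A₀)
    (hπ : ∀ x : A₀, π (x : A) = x)
    (hNak : ∀ (M : Type u) [AddCommGroup M] [Module A M], Module.Finite A M →
      kerSMulSubmodule π M = ⊤ → Subsingleton M) :
    (∀ (Q : Type u) [AddCommGroup Q] [Module A₀ Q], Module.Finite A₀ Q →
      Module.Projective A₀ Q →
      ∀ (E : Type u) [AddCommGroup E] [Module A E] (ι : Q →ₗ[A₀] E),
        IsBaseChangeAlong A A₀ Q E ι →
          Module.Finite A E ∧ Module.Projective A E ∧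
            ∃ e : Q ≃ₗ[A₀] (E ⧸ kerSMulSubmodule π E),
              ∀ q : Q, e q = Submodule.Quotient.mk (ι q)) ∧
    (∀ (P : Type u) [AddCommGroup P] [Module A P], Module.Finite A P →
      Module.Projective A P →
        Module.Finite A₀ (P ⧸ kerSMulSubmodule π P) ∧
        Module.Projective A₀ (P ⧸ kerSMulSubmodule π P) ∧
        ∀ (E : Type u) [AddCommGroup E] [Module A E]
          (ι : (P ⧸ kerSMulSubmodule π P) →ₗ[A₀] E),
          IsBaseChangeAlong A A₀ (P ⧸ kerSMulSubmodule π P) E ι →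
            Nonempty (E ≃ₗ[A] P)) := by
  constructor
  · intro Q _ _ hQfin hQproj E _ _ ι h
    haveI := hQfin; haveI := hQproj
    exact ⟨finite_of_bca ι h, projective_of_bca ι h, equiv_of_bca π hπ ι h⟩
  · intro P _ _ hPfin hPproj
    haveI := hPfin; haveI := hPproj
    exact ⟨finite_quot π hπ, projective_quot π hπ,
      fun E _ _ ι h => main_iso π hπ hNak ι h⟩
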